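/- Let D be a digraph with minimum semidegree at least d, let X ⊆ V(D) and Y = V(D) \ X, and let τ be the number of essential components of D[Y]. Then (2d+1)τ ≤ |Y| + 2·min{e(X,Y), e(Y,X)}. -/

import Mathlib

open Finset

def arcs {V : Type*} [DecidableEq V] (A : V → V → Prop) [DecidableRel A]
    (X Y : Finset V) : ℕ :=
  ((X ×ˢ Y).filter (fun p => A p.1 p.2)).card

def outdeg {V : Type*} [Fintype V] (A : V → V → Prop) [DecidableRel A] (v : V) : ℕ :=
  (Finset.univ.filter (fun w => A v w)).card

def indeg {V : Type*} [Fintype V] (A : V → V → Prop) [DecidableRel A] (v : V) : ℕ :=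
  (Finset.univ.filter (fun w => A w v)).card

/-- The underlying (simple) graph of the subdigraph of `A` induced on `Y`. -/
def underOn {V : Type*} (A : V → V → Prop) (Y : Finset V) : SimpleGraph V where
  Adj u v := u ≠ v ∧ u ∈ Y ∧ v ∈ Y ∧ (A u v ∨ A v u)
  symm := by
    constructor
    intro u v h
    exact ⟨h.1.symm, h.2.2.1, h.2.1, h.2.2.2.symm⟩
  loopless := by
    constructor
    intro v h
    exact h.1 rfl

def IsMatchingOn {V : Type*} (G : SimpleGraph V) (S : Finset V) (M : Finset (V × V)) : Prop :=
  (∀ p ∈ M, G.Adj p.1 p.2 ∧ p.1 ∈ S ∧ p.2 ∈ S) ∧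
  (∀ p ∈ M, ∀ q ∈ M, (p.1 = q.1 ∨ p.1 = q.2 ∨ p.2 = q.1 ∨ p.2 = q.2) → p = q)

def IsPerfectMatchingOn {V : Type*} (G : SimpleGraph V) (S : Finset V)
    (M : Finset (V × V)) : Prop :=
  IsMatchingOn G S M ∧ ∀ v ∈ S, ∃ p ∈ M, v = p.1 ∨ v = p.2

def IsComponent {V : Type*} (G : SimpleGraph V) (T : Finset V) : Prop :=
  ∃ u ∈ T, ∀ w, w ∈ T ↔ G.Reachable u w

def IsTight {V : Type*} [DecidableEq V] (G : SimpleGraph V) (T : Finset V) : Prop :=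
  (∀ v ∈ T, ∃ M, IsPerfectMatchingOn G (T.erase v) M) ∧
  (∀ v ∈ T, ∀ M, IsPerfectMatchingOn G (T.erase v) M →
    ∀ p ∈ M, (G.Adj v p.1 ↔ G.Adj v p.2))

/-- `T` is an essential component of the subdigraph of `A` induced on `Y`:
a component of `D[Y]` whose underlying graph is tight and which contains
no pair of antiparallel arcs. -/
def IsEssentialComponent {V : Type*} [DecidableEq V] (A : V → V → Prop) (Y : Finset V)
    (T : Finset V) : Prop :=
  T ⊆ Y ∧ IsComponent (underOn A Y) T ∧ IsTight (underOn A Y) T ∧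
    ∀ u ∈ T, ∀ v ∈ T, ¬ (A u v ∧ A v u)

section Aux
set_option linter.unusedSectionVars false
variable {V : Type*} [DecidableEq V]

lemma arcs_eq_sum_left (A : V → V → Prop) [DecidableRel A] (S T : Finset V) :
    arcs A S T = ∑ u ∈ S, (T.filter (fun w => A u w)).card := by
  unfold arcs
  rw [Finset.card_eq_sum_card_fiberwise (f := Prod.fst) (t := S)
    (fun p hp => (Finset.mem_product.mp (Finset.mem_filter.mp hp).1).1)]
  refine Finset.sum_congr rfl fun u hu => ?_
  refine Finset.card_bij (fun p _ => p.2) ?_ ?_ ?_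
  · intro p hp
    simp only [Finset.mem_filter, Finset.mem_product] at hp ⊢
    exact ⟨hp.1.1.2, hp.2 ▸ hp.1.2⟩
  · intro p hp q hq h
    simp only [Finset.mem_filter] at hp hq
    exact Prod.ext (hp.2.trans hq.2.symm) h
  · intro w hw
    simp only [Finset.mem_filter] at hw
    exact ⟨(u, w), by simp [Finset.mem_filter, Finset.mem_product, hu, hw.1, hw.2], rfl⟩

lemma arcs_eq_sum_right (A : V → V → Prop) [DecidableRel A] (S T : Finset V) :
    arcs A S T = ∑ w ∈ T, (S.filter (fun u => A u w)).card := by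
  unfold arcs
  rw [Finset.card_eq_sum_card_fiberwise (f := Prod.snd) (t := T)
    (fun p hp => (Finset.mem_product.mp (Finset.mem_filter.mp hp).1).2)]
  refine Finset.sum_congr rfl fun w hw => ?_
  refine Finset.card_bij (fun p _ => p.1) ?_ ?_ ?_
  · intro p hp
    simp only [Finset.mem_filter, Finset.mem_product] at hp ⊢
    exact ⟨hp.1.1.1, hp.2 ▸ hp.1.2⟩
  · intro p hp q hq h
    simp only [Finset.mem_filter] at hp hq
    exact Prod.ext h (hp.2.trans hq.2.symm)
  · intro u hu
    simp only [Finset.mem_filter] at hu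
    exact ⟨(u, w), by simp [Finset.mem_filter, Finset.mem_product, hw, hu.1, hu.2], rfl⟩

lemma pm_card {G : SimpleGraph V} {S : Finset V} {M : Finset (V × V)}
    (h : IsPerfectMatchingOn G S M) : S.card = 2 * M.card := by
  have hS : S = M.biUnion (fun p => {p.1, p.2}) := by
    ext v
    simp only [Finset.mem_biUnion, Finset.mem_insert, Finset.mem_singleton]
    constructor
    · intro hv
      obtain ⟨p, hp, h'⟩ := h.2 v hv
      exact ⟨p, hp, h'⟩
    · rintro ⟨p, hp, rfl | rfl⟩
      · exact (h.1.1 p hp).2.1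
      · exact (h.1.1 p hp).2.2
  rw [hS, Finset.card_biUnion, Finset.sum_congr rfl
      (fun p hp => Finset.card_pair ((h.1.1 p hp).1.ne)),
    Finset.sum_const, smul_eq_mul, mul_comm]
  intro p hp q hq hne
  rw [Function.onFun, Finset.disjoint_left]
  intro x hx1 hx2
  simp only [Finset.mem_insert, Finset.mem_singleton] at hx1 hx2
  apply hne
  apply h.1.2 p hp q hq
  rcases hx1 with rfl | rfl <;> rcases hx2 with h' | h' <;> tauto

lemma mem_of_adj (A : V → V → Prop) {Y T : Finset V}
    (hC : IsComponent (underOn A Y) T) {v w : V} (hv : v ∈ T) (hvY : v ∈ Y)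
    (hw : w ∈ Y) (hne : v ≠ w) (harc : A v w ∨ A w v) : w ∈ T := by
  obtain ⟨u, hu, hspec⟩ := hC
  have hadj : (underOn A Y).Adj v w := ⟨hne, hvY, hw, harc⟩
  exact (hspec w).mpr (((hspec v).mp hv).trans hadj.reachable)

lemma comp_eq {G : SimpleGraph V} {T1 T2 : Finset V} (h1 : IsComponent G T1)
    (h2 : IsComponent G T2) {w : V} (hw1 : w ∈ T1) (hw2 : w ∈ T2) : T1 = T2 := by
  obtain ⟨u1, _, s1⟩ := h1
  obtain ⟨u2, _, s2⟩ := h2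
  have r1 : G.Reachable u1 w := (s1 w).mp hw1
  have r2 : G.Reachable u2 w := (s2 w).mp hw2
  ext x
  rw [s1 x, s2 x]
  exact ⟨fun h => r2.trans (r1.symm.trans h), fun h => r1.trans (r2.symm.trans h)⟩

lemma essential_bound {V : Type*} [Fintype V] [DecidableEq V]
    (A : V → V → Prop) [DecidableRel A] (hloop : ∀ v, ¬ A v v)
    (d : ℕ) (hdeg : ∀ v, d ≤ outdeg A v ∧ d ≤ indeg A v)
    (X : Finset V) (Y : Finset V) (hY : Y = Xᶜ)
    {T : Finset V} (hT : IsEssentialComponent A Y T) :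
    2 * d + 1 ≤ T.card + 2 * arcs A T X ∧ 2 * d + 1 ≤ T.card + 2 * arcs A X T := by
  obtain ⟨hTY, hC, hTight, hAnti⟩ := hT
  obtain ⟨u, hu, -⟩ := id hC
  obtain ⟨M, hM⟩ := hTight.1 u hu
  have hpos : 0 < T.card := Finset.card_pos.mpr ⟨u, hu⟩
  have hcard : T.card = 2 * M.card + 1 := by
    have h1 := pm_card hM
    have h2 := Finset.card_erase_of_mem hu
    omega
  set k := M.card with hk
  -- bound on internal arcs
  have hin : arcs A T T ≤ k * T.card := by
    set F := (T ×ˢ T).filter (fun p => A p.1 p.2) with hF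
    have hFsub : ∀ p ∈ F, p.1 ∈ T ∧ p.2 ∈ T ∧ A p.1 p.2 := by
      intro p hp
      simp only [hF, Finset.mem_filter, Finset.mem_product] at hp
      exact ⟨hp.1.1, hp.1.2, hp.2⟩
    have hdisj : Disjoint F (F.image Prod.swap) := by
      rw [Finset.disjoint_left]
      intro p hp hp'
      obtain ⟨h1, h2, h3⟩ := hFsub p hp
      obtain ⟨q, hq, hqp⟩ := Finset.mem_image.mp hp'
      obtain ⟨g1, g2, g3⟩ := hFsub q hq
      have : A p.2 p.1 := by
        have : q.1 = p.2 ∧ q.2 = p.1 := by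
          constructor <;> (rw [← hqp]; rfl)
        rw [← this.1, ← this.2]; exact g3
      exact hAnti p.1 h1 p.2 h2 ⟨h3, this⟩
    have hsub : F ∪ F.image Prod.swap ⊆ T.offDiag := by
      intro p hp
      rcases Finset.mem_union.mp hp with hp | hp
      · obtain ⟨h1, h2, h3⟩ := hFsub p hp
        exact Finset.mem_offDiag.mpr ⟨h1, h2, fun h => hloop p.1 (h ▸ h3)⟩
      · obtain ⟨q, hq, hqp⟩ := Finset.mem_image.mp hp
        obtain ⟨g1, g2, g3⟩ := hFsub q hq
        subst hqp
        refine Finset.mem_offDiag.mpr ⟨g2, g1, ?_⟩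
        show q.2 ≠ q.1
        intro h
        rw [h] at g3
        exact hloop q.1 g3
    have h2F : 2 * F.card ≤ T.card * T.card - T.card := by
      have e1 : (F ∪ F.image Prod.swap).card ≤ T.offDiag.card := Finset.card_le_card hsub
      rw [Finset.card_union_of_disjoint hdisj,
        Finset.card_image_of_injective _ Prod.swap_injective, Finset.offDiag_card] at e1
      omega
    have key : T.card * T.card - T.card = 2 * (k * T.card) := by
      rw [hcard]
      have : (2 * k + 1) * (2 * k + 1) = 2 * (k * (2 * k + 1)) + (2 * k + 1) := by ring
      rw [this, Nat.add_sub_cancel]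
    have : 2 * arcs A T T ≤ 2 * (k * T.card) := by
      rw [← key]; exact h2F
    exact Nat.le_of_mul_le_mul_left this (by norm_num)
  -- a vertex of low internal outdegree
  have exlow : ∀ f : V → ℕ, (∑ v ∈ T, f v = arcs A T T) → ∃ v ∈ T, f v ≤ k := by
    intro f hsum
    by_contra hcon
    push_neg at hcon
    have h1 : T.card • (k + 1) ≤ ∑ v ∈ T, f v :=
      Finset.card_nsmul_le_sum T f (k + 1) (fun x hx => hcon x hx)
    rw [smul_eq_mul, hsum] at h1
    have h2 : T.card * (k + 1) = k * T.card + T.card := by ring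
    have h3 : k * T.card + T.card ≤ k * T.card + 0 := by
      rw [Nat.add_zero]; rw [← h2]; exact le_trans h1 hin
    have := Nat.le_of_add_le_add_left h3
    omega
  constructor
  · -- out direction
    obtain ⟨v, hv, hvk⟩ := exlow (fun v => (T.filter (fun w => A v w)).card)
      (arcs_eq_sum_left A T T).symm
    have hvY : v ∈ Y := hTY hv
    have hout : (Finset.univ.filter (fun w => A v w)) ⊆
        T.filter (fun w => A v w) ∪ X.filter (fun w => A v w) := by
      intro w hw
      simp only [Finset.mem_filter, Finset.mem_univ, true_and] at hw
      by_cases hwX : w ∈ X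
      · exact Finset.mem_union_right _ (Finset.mem_filter.mpr ⟨hwX, hw⟩)
      · have hwY : w ∈ Y := by rw [hY]; exact Finset.mem_compl.mpr hwX
        have hne : v ≠ w := fun h => hloop v (h ▸ hw)
        exact Finset.mem_union_left _ (Finset.mem_filter.mpr
          ⟨mem_of_adj A hC hv hvY hwY hne (Or.inl hw), hw⟩)
    have hd1 : d ≤ (T.filter (fun w => A v w)).card + (X.filter (fun w => A v w)).card :=
      le_trans (hdeg v).1 (le_trans (Finset.card_le_card hout) (Finset.card_union_le _ _))
    have hXv : (X.filter (fun w => A v w)).card ≤ arcs A T X := by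
      rw [arcs_eq_sum_left]
      exact Finset.single_le_sum (f := fun u => (X.filter (fun w => A u w)).card)
        (fun i _ => Nat.zero_le _) hv
    omega
  · -- in direction
    obtain ⟨v, hv, hvk⟩ := exlow (fun v => (T.filter (fun w => A w v)).card)
      (arcs_eq_sum_right A T T).symm
    have hvY : v ∈ Y := hTY hv
    have hout : (Finset.univ.filter (fun w => A w v)) ⊆
        T.filter (fun w => A w v) ∪ X.filter (fun w => A w v) := by
      intro w hw
      simp only [Finset.mem_filter, Finset.mem_univ, true_and] at hw
      by_cases hwX : w ∈ X
      · exact Finset.mem_union_right _ (Finset.mem_filter.mpr ⟨hwX, hw⟩)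
      · have hwY : w ∈ Y := by rw [hY]; exact Finset.mem_compl.mpr hwX
        have hne : v ≠ w := fun h => hloop v (h ▸ hw)
        exact Finset.mem_union_left _ (Finset.mem_filter.mpr
          ⟨mem_of_adj A hC hv hvY hwY hne (Or.inr hw), hw⟩)
    have hd1 : d ≤ (T.filter (fun w => A w v)).card + (X.filter (fun w => A w v)).card :=
      le_trans (hdeg v).2 (le_trans (Finset.card_le_card hout) (Finset.card_union_le _ _))
    have hXv : (X.filter (fun w => A w v)).card ≤ arcs A X T := by
      rw [arcs_eq_sum_right]
      exact Finset.single_le_sum (f := fun w => (X.filter (fun u => A u w)).card)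
        (fun i _ => Nat.zero_le _) hv
    omega

end Aux

/-- If `D` has minimum semidegree at least `d`, `X ⊆ V(D)`, `Y = V(D) \ X`, and `τ` is the
number of essential components of `D[Y]`, then `(2d+1)τ ≤ |Y| + 2·min{e(X,Y), e(Y,X)}`. -/
theorem stmt5 {V : Type*} [Fintype V] [DecidableEq V]
    (A : V → V → Prop) [DecidableRel A] (hloop : ∀ v, ¬ A v v)
    (d : ℕ) (hdeg : ∀ v, d ≤ outdeg A v ∧ d ≤ indeg A v)
    (X : Finset V) (Y : Finset V) (hY : Y = Xᶜ)
    (τ : ℕ) (hτ : τ = Set.ncard {T : Finset V | IsEssentialComponent A Y T}) :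
    (2 * d + 1) * τ ≤ Y.card + 2 * min (arcs A X Y) (arcs A Y X) := by
  classical
  have hfin : ({T : Finset V | IsEssentialComponent A Y T}).Finite := Set.toFinite _
  set 𝒮 := hfin.toFinset with h𝒮
  have hτ' : τ = 𝒮.card := by
    rw [hτ, Set.ncard_eq_toFinset_card _ hfin]
  have hmem : ∀ T ∈ 𝒮, IsEssentialComponent A Y T := by
    intro T hT
    exact (Set.Finite.mem_toFinset hfin).mp hT
  have hdisj : ∀ T1 ∈ 𝒮, ∀ T2 ∈ 𝒮, T1 ≠ T2 → Disjoint T1 T2 := by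
    intro T1 h1 T2 h2 hne
    rw [Finset.disjoint_left]
    intro w hw1 hw2
    exact hne (comp_eq (hmem T1 h1).2.1 (hmem T2 h2).2.1 hw1 hw2)
  have hcardsum : ∑ T ∈ 𝒮, T.card ≤ Y.card := by
    rw [← Finset.card_biUnion hdisj]
    apply Finset.card_le_card
    intro v hv
    obtain ⟨T, hT, hvT⟩ := Finset.mem_biUnion.mp hv
    exact (hmem T hT).1 hvT
  have harcsum1 : ∑ T ∈ 𝒮, arcs A T X ≤ arcs A Y X := by
    have hd : ∀ T1 ∈ 𝒮, ∀ T2 ∈ 𝒮, T1 ≠ T2 →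
        Disjoint ((T1 ×ˢ X).filter (fun p => A p.1 p.2))
          ((T2 ×ˢ X).filter (fun p => A p.1 p.2)) := by
      intro T1 h1 T2 h2 hne
      rw [Finset.disjoint_left]
      intro p hp1 hp2
      simp only [Finset.mem_filter, Finset.mem_product] at hp1 hp2
      exact Finset.disjoint_left.mp (hdisj T1 h1 T2 h2 hne) hp1.1.1 hp2.1.1
    show ∑ T ∈ 𝒮, ((T ×ˢ X).filter (fun p => A p.1 p.2)).card ≤ arcs A Y X
    rw [← Finset.card_biUnion hd]
    apply Finset.card_le_card
    intro p hp
    obtain ⟨T, hT, hpT⟩ := Finset.mem_biUnion.mp hp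
    simp only [Finset.mem_filter, Finset.mem_product] at hpT ⊢
    exact ⟨⟨(hmem T hT).1 hpT.1.1, hpT.1.2⟩, hpT.2⟩
  have harcsum2 : ∑ T ∈ 𝒮, arcs A X T ≤ arcs A X Y := by
    have hd : ∀ T1 ∈ 𝒮, ∀ T2 ∈ 𝒮, T1 ≠ T2 →
        Disjoint ((X ×ˢ T1).filter (fun p => A p.1 p.2))
          ((X ×ˢ T2).filter (fun p => A p.1 p.2)) := by
      intro T1 h1 T2 h2 hne
      rw [Finset.disjoint_left]
      intro p hp1 hp2
      simp only [Finset.mem_filter, Finset.mem_product] at hp1 hp2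
      exact Finset.disjoint_left.mp (hdisj T1 h1 T2 h2 hne) hp1.1.2 hp2.1.2
    show ∑ T ∈ 𝒮, ((X ×ˢ T).filter (fun p => A p.1 p.2)).card ≤ arcs A X Y
    rw [← Finset.card_biUnion hd]
    apply Finset.card_le_card
    intro p hp
    obtain ⟨T, hT, hpT⟩ := Finset.mem_biUnion.mp hp
    simp only [Finset.mem_filter, Finset.mem_product] at hpT ⊢
    exact ⟨⟨hpT.1.1, (hmem T hT).1 hpT.1.2⟩, hpT.2⟩
  have hstart : (2 * d + 1) * τ = ∑ _T ∈ 𝒮, (2 * d + 1) := by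
    rw [hτ', Finset.sum_const, smul_eq_mul, mul_comm]
  have hchain1 : (2 * d + 1) * τ ≤ Y.card + 2 * arcs A Y X := by
    rw [hstart]
    calc ∑ _T ∈ 𝒮, (2 * d + 1) ≤ ∑ T ∈ 𝒮, (T.card + 2 * arcs A T X) :=
          Finset.sum_le_sum (fun T hT =>
            (essential_bound A hloop d hdeg X Y hY (hmem T hT)).1)
      _ = (∑ T ∈ 𝒮, T.card) + 2 * ∑ T ∈ 𝒮, arcs A T X := by
          rw [Finset.sum_add_distrib, Finset.mul_sum]
      _ ≤ Y.card + 2 * arcs A Y X := by omega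
  have hchain2 : (2 * d + 1) * τ ≤ Y.card + 2 * arcs A X Y := by
    rw [hstart]
    calc ∑ _T ∈ 𝒮, (2 * d + 1) ≤ ∑ T ∈ 𝒮, (T.card + 2 * arcs A X T) :=
          Finset.sum_le_sum (fun T hT =>
            (essential_bound A hloop d hdeg X Y hY (hmem T hT)).2)
      _ = (∑ T ∈ 𝒮, T.card) + 2 * ∑ T ∈ 𝒮, arcs A X T := by
          rw [Finset.sum_add_distrib, Finset.mul_sum]
      _ ≤ Y.card + 2 * arcs A X Y := by omega
  rcases le_total (arcs A X Y) (arcs A Y X) with h | h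
  · rw [min_eq_left h]; exact hchain2
  · rw [min_eq_right h]; exact hchain1
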